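/- Let d ≥ 2, let e be a directed edge of the Kautz digraph K(d,D), and let k be an integer with 2 ≤ k ≤ D. Then U_{k−1}(e) ≥ ((k−1)/(d·k))·U_k(e). -/

import Mathlib

open scoped BigOperators Classical

namespace Kautz

/-- A vertex of the Kautz digraph `K(d,D)`: a word of length `D` over the
alphabet `{0,1,…,d}` in which adjacent letters are distinct. -/
structure Vertex (d D : ℕ) where
  word : List (Fin (d+1))
  length_eq : word.length = D
  chain : word.Chain' (· ≠ ·)

/-- Adjacency in `K(d,D)`: there is an edge `u → v` iff some word `w` of length
`D+1` with adjacent letters distinct has `u` as its prefix of length `D` and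
`v` as its suffix of length `D`. -/
def Adj {d D : ℕ} (u v : Vertex d D) : Prop :=
  ∃ w : List (Fin (d+1)), w.length = D + 1 ∧ w.Chain' (· ≠ ·) ∧
    u.word = w.dropLast ∧ v.word = w.tail

/-- A directed edge of `K(d,D)`. -/
structure Edge (d D : ℕ) where
  src : Vertex d D
  tgt : Vertex d D
  adj : Adj src tgt

/-- The edge-word `w(e) = a₀a₁⋯a_D` of an edge `e : u → v`, namely `u`
followed by the last letter of `v`. -/
def Edge.word {d D : ℕ} (e : Edge d D) : List (Fin (d+1)) :=
  e.src.word ++ e.tgt.word.drop (D - 1)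

/-- `p` is a walk from `x` to `y`, recorded as the list of successive vertices. -/
def IsWalk {d D : ℕ} (p : List (Vertex d D)) (x y : Vertex d D) : Prop :=
  p.head? = some x ∧ p.getLast? = some y ∧ p.Chain' Adj

/-- Directed graph distance in `K(d,D)`. -/
noncomputable def dist {d D : ℕ} (x y : Vertex d D) : ℕ :=
  sInf {k | ∃ p : List (Vertex d D), IsWalk p x y ∧ p.length = k + 1}

/-- `N(e;k,t)`: the number of ordered pairs `(x,y)` with `dist x y = k` such
that some geodesic (walk of length `k = dist x y`) from `x` to `y` uses `e` as
its `t`-th edge. -/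
noncomputable def N {d D : ℕ} (e : Edge d D) (k t : ℕ) : ℕ :=
  Set.ncard {xy : Vertex d D × Vertex d D |
    dist xy.1 xy.2 = k ∧
    ∃ p : List (Vertex d D), IsWalk p xy.1 xy.2 ∧ p.length = k + 1 ∧
      p[t-1]? = some e.src ∧ p[t]? = some e.tgt}

/-- `U_k(e) = ∑_{t=1}^{k} N(e;k,t)`. -/
noncomputable def U {d D : ℕ} (e : Edge d D) (k : ℕ) : ℕ :=
  ∑ t ∈ Finset.Icc 1 k, N e k t

/-- `cong(e) = ∑_{k=1}^{D} U_k(e)`. -/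
noncomputable def cong {d D : ℕ} (e : Edge d D) : ℕ :=
  ∑ k ∈ Finset.Icc 1 D, U e k

/-- `τ(d,D) = (D−1)·d^{D−2} + D·d^{D−1}`. -/
def tau (d D : ℕ) : ℕ := (D - 1) * d ^ (D - 2) + D * d ^ (D - 1)

/-- A word has a border: some proper nonempty prefix equals the suffix of the
same length. -/
def HasBorder {α : Type*} (w : List α) : Prop :=
  ∃ ℓ, 1 ≤ ℓ ∧ ℓ ≤ w.length - 1 ∧ w.take ℓ = w.drop (w.length - ℓ)

/-- An unbordered word. -/
def Unbordered {α : Type*} (w : List α) : Prop := ¬ HasBorder w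

/-- A square-free word: no nonempty factor of the form `XX`. -/
def SquareFree {α : Type*} (w : List α) : Prop :=
  ¬ ∃ X : List α, X ≠ [] ∧ (X ++ X) <:+: w

/-- A `7/4⁺`-power-free word: no factor `x^k y` with `x` nonempty, `k ≥ 1`,
`y` a prefix of `x`, and `(k·|x| + |y|)/|x| > 7/4`. -/
def SevenFourthsPlusFree {α : Type*} (w : List α) : Prop :=
  ¬ ∃ (x y : List α) (k : ℕ), x ≠ [] ∧ 1 ≤ k ∧ y <+: x ∧
    ((List.replicate k x).flatten ++ y) <:+: w ∧
    7 * x.length < 4 * (k * x.length + y.length)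

/-- A word over `{0,1,…,d}` is ternary if it uses only the letters `{0,1,2}`. -/
def IsTernary {n : ℕ} (w : List (Fin n)) : Prop := ∀ a ∈ w, (a : ℕ) < 3

/-- The suffix of `w` of length `t`. -/
def suffixWord {α : Type*} (w : List α) (t : ℕ) : List α := w.drop (w.length - t)

/-- `R_t(w)`: the set of admissible overlap lengths `r` at position `t`, i.e.
those `r` with `t+1 ≤ r ≤ |w|−t−1` such that `w = A·B·V·B` where `B` is the
suffix of `w` of length `t`, `V` is nonempty, and `|B·V| = r`. -/
noncomputable def Rt {α : Type*} (w : List α) (t : ℕ) : Finset ℕ :=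
  (Finset.Icc (t + 1) (w.length - t - 1)).filter fun r =>
    ∃ A V : List α, V ≠ [] ∧
      w = A ++ suffixWord w t ++ V ++ suffixWord w t ∧ t + V.length = r

/-- The deficit `Δ_t(e) = d^{D−1} − N(e;D,t)`. -/
noncomputable def deficit {d D : ℕ} (e : Edge d D) (t : ℕ) : ℝ :=
  (d : ℝ) ^ (D - 1) - (N e D t : ℝ)

/-- The total deficit `Δ(e) = ∑_{t=1}^{D} Δ_t(e)`. -/
noncomputable def totalDeficit {d D : ℕ} (e : Edge d D) : ℝ :=
  ∑ t ∈ Finset.Icc 1 D, deficit e t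

/-- The weighted overlap count
`Ω_d(e) = ∑_{j=1}^{⌈(D+1)/2⌉} ∑_{r ∈ R_j(w(e))} d^{−(r−j)}`. -/
noncomputable def Omega {d D : ℕ} (e : Edge d D) : ℝ :=
  ∑ j ∈ Finset.Icc 1 ((D + 2) / 2), ∑ r ∈ Rt e.word j, (d : ℝ) ^ ((j : ℤ) - (r : ℤ))

/-- The overlap `ov(u,v)`: the largest `j ≤ D` such that the last `j` letters
of `u` equal the first `j` letters of `v`. -/
noncomputable def ov {d D : ℕ} (u v : Vertex d D) : ℕ :=
  sSup {j | j ≤ D ∧ u.word.drop (D - j) = v.word.take j}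

end Kautz
namespace Kautz

section Aux

variable {d D : ℕ}

lemma Vertex.ext' {u v : Vertex d D} (h : u.word = v.word) : u = v := by
  cases u; cases v; simp_all

instance : Finite (Vertex d D) := by
  have hfin : Finite (List.Vector (Fin (d+1)) D) := Finite.of_fintype _
  exact Finite.of_injective (β := List.Vector (Fin (d+1)) D)
    (fun v => ⟨v.word, v.length_eq⟩) (fun u v h => Vertex.ext' (congrArg Subtype.val h))

lemma word_ne_nil (hD : 1 ≤ D) (v : Vertex d D) : v.word ≠ [] := by
  intro h
  have := v.length_eq
  rw [h] at this
  simp at this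
  omega

lemma adj_tgt (hD : 1 ≤ D) {u v : Vertex d D} (h : Adj u v) :
    ∃ b : Fin (d+1), b ≠ u.word.getLastD 0 ∧ v.word = u.word.tail ++ [b] := by
  obtain ⟨w, hlen, hch, hu, hv⟩ := h
  have hw : w ≠ [] := by intro h0; rw [h0] at hlen; simp at hlen
  have hune : u.word ≠ [] := word_ne_nil hD u
  have hweq : w = u.word ++ [w.getLast hw] := by
    conv_lhs => rw [← List.dropLast_append_getLast hw]
    rw [← hu]
  refine ⟨w.getLast hw, ?_, ?_⟩
  · have hgl : u.word.getLast? = some (u.word.getLastD 0) := by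
      obtain ⟨g, hg⟩ := Option.isSome_iff_exists.mp (List.getLast?_isSome.mpr hune)
      rw [List.getLastD_eq_getLast?, hg]
      rfl
    rw [hweq, List.Chain', List.isChain_append] at hch
    intro hb
    exact hch.2.2 _ hgl _ rfl hb.symm
  · rw [hv]
    conv_lhs => rw [hweq]
    rw [List.tail_append_singleton_of_ne_nil hune]

lemma adj_src (hD : 1 ≤ D) {u v : Vertex d D} (h : Adj u v) :
    ∃ a : Fin (d+1), a ≠ v.word.headD 0 ∧ u.word = a :: v.word.dropLast := by
  obtain ⟨w, hlen, hch, hu, hv⟩ := h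
  have hw : w ≠ [] := by intro h0; rw [h0] at hlen; simp at hlen
  have hvne : v.word ≠ [] := word_ne_nil hD v
  have hweq : w = w.head hw :: v.word := by
    conv_lhs => rw [← List.cons_head_tail hw]
    rw [← hv]
  refine ⟨w.head hw, ?_, ?_⟩
  · obtain ⟨c, cs, hcc⟩ := List.exists_cons_of_ne_nil hvne
    rw [hweq, List.Chain', List.isChain_cons] at hch
    intro ha
    refine hch.1 (v.word.headD 0) ?_ ha
    rw [hcc]; rfl
  · rw [hu]
    conv_lhs => rw [hweq]
    rw [List.dropLast_cons_of_ne_nil hvne]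

lemma walk_ne_nil {p : List (Vertex d D)} {x y : Vertex d D} (h : IsWalk p x y) : p ≠ [] := by
  intro hp; rw [hp] at h; simp [IsWalk] at h

lemma dist_le {x y : Vertex d D} {m : ℕ} {p : List (Vertex d D)}
    (h : IsWalk p x y) (hl : p.length = m + 1) : dist x y ≤ m :=
  Nat.sInf_le ⟨p, h, hl⟩

lemma walk_concat {q : List (Vertex d D)} {x y' y : Vertex d D}
    (hq : IsWalk q x y') (ha : Adj y' y) : IsWalk (q ++ [y]) x y := by
  obtain ⟨h1, h2, h3⟩ := hq
  have hne : q ≠ [] := by intro h0; rw [h0] at h1; simp at h1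
  refine ⟨?_, List.getLast?_concat, ?_⟩
  · rw [List.head?_append_of_ne_nil _ hne]; exact h1
  · rw [List.Chain', List.isChain_append]
    refine ⟨h3, List.isChain_singleton y, ?_⟩
    intro a hA b hB
    rw [h2] at hA
    simp only [List.head?_cons, Option.mem_def, Option.some.injEq] at hA hB
    subst hA
    subst hB
    exact ha

end Aux

end Kautz

namespace Kautz

section Walks

variable {d D : ℕ}

lemma walk_cons {q : List (Vertex d D)} {x x' y : Vertex d D}
    (hq : IsWalk q x' y) (ha : Adj x x') : IsWalk (x :: q) x y := by
  obtain ⟨h1, h2, h3⟩ := hq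
  have hne : q ≠ [] := by intro h0; rw [h0] at h1; simp at h1
  obtain ⟨c, cs, rfl⟩ := List.exists_cons_of_ne_nil hne
  refine ⟨rfl, ?_, ?_⟩
  · rw [List.getLast?_cons_cons]; exact h2
  · rw [List.Chain', List.isChain_cons]
    refine ⟨?_, h3⟩
    intro b hb
    simp only [List.head?_cons, Option.mem_def, Option.some.injEq] at h1 hb
    subst hb
    subst h1
    exact ha

lemma exists_dropLast {x y : Vertex d D} {k : ℕ} (hk : 1 ≤ k) {p : List (Vertex d D)}
    (hp : IsWalk p x y) (hl : p.length = k + 1) (hdist : dist x y = k) :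
    ∃ y', IsWalk p.dropLast x y' ∧ Adj y' y ∧ dist x y' = k - 1 := by
  obtain ⟨hhead, hlast, hchain⟩ := hp
  have hk1 : k - 1 < p.length := by omega
  refine ⟨p[k-1], ?_, ?_, ?_⟩
  case _ =>
    refine ⟨?_, ?_, hchain.prefix p.dropLast_prefix⟩
    · rw [List.head?_dropLast, if_pos (by omega)]; exact hhead
    · rw [List.getLast?_eq_getElem?, List.length_dropLast, hl,
        show k + 1 - 1 - 1 = k - 1 from by omega,
        List.getElem?_dropLast, if_pos (by omega)]
      simp
  case _ =>
    have hy : p[k]'(by omega) = y := by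
      rw [List.getLast?_eq_getElem?, hl, show k + 1 - 1 = k from by omega] at hlast
      obtain ⟨h', hy⟩ := List.getElem?_eq_some_iff.mp hlast
      exact hy
    have hadj := List.isChain_iff_getElem.mp hchain (k-1) (by omega)
    simp only [List.get_eq_getElem, show k - 1 + 1 = k from by omega] at hadj
    rw [hy] at hadj
    exact hadj
  case _ =>
    have hq : IsWalk p.dropLast x (p[k-1]'hk1) := by
      refine ⟨?_, ?_, hchain.prefix p.dropLast_prefix⟩
      · rw [List.head?_dropLast, if_pos (by omega)]; exact hhead
      · rw [List.getLast?_eq_getElem?, List.length_dropLast, hl,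
          show k + 1 - 1 - 1 = k - 1 from by omega,
          List.getElem?_dropLast, if_pos (by omega)]
        simp
    have hadj : Adj (p[k-1]'hk1) y := by
      have hy : p[k]'(by omega) = y := by
        rw [List.getLast?_eq_getElem?, hl, show k + 1 - 1 = k from by omega] at hlast
        obtain ⟨h', hy⟩ := List.getElem?_eq_some_iff.mp hlast
        exact hy
      have hadj := List.isChain_iff_getElem.mp hchain (k-1) (by omega)
      simp only [List.get_eq_getElem, show k - 1 + 1 = k from by omega] at hadj
      rw [hy] at hadj
      exact hadj
    refine le_antisymm (dist_le hq (by rw [List.length_dropLast, hl]; omega)) ?_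
    refine le_csInf ⟨k - 1, p.dropLast, hq, by rw [List.length_dropLast, hl]; omega⟩ ?_
    rintro m ⟨q, hq', hql⟩
    have hw2 : IsWalk (q ++ [y]) x y := walk_concat hq' hadj
    have : dist x y ≤ m + 1 := dist_le hw2 (by simp [hql])
    omega

lemma exists_tail {x y : Vertex d D} {k : ℕ} (hk : 1 ≤ k) {p : List (Vertex d D)}
    (hp : IsWalk p x y) (hl : p.length = k + 1) (hdist : dist x y = k) :
    ∃ x', IsWalk p.tail x' y ∧ Adj x x' ∧ dist x' y = k - 1 := by
  obtain ⟨hhead, hlast, hchain⟩ := hp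
  have hk1 : 1 < p.length := by omega
  refine ⟨p[1], ?_, ?_, ?_⟩
  case _ =>
    refine ⟨?_, ?_, hchain.suffix p.tail_suffix⟩
    · rw [List.head?_eq_getElem?, List.getElem?_tail]
      simp
    · rw [List.getLast?_eq_getElem?, List.length_tail, hl, List.getElem?_tail,
        show k + 1 - 1 - 1 + 1 = k from by omega]
      rw [List.getLast?_eq_getElem?, hl, show k + 1 - 1 = k from by omega] at hlast
      exact hlast
  case _ =>
    have hx : p[0]'(by omega) = x := by
      rw [List.head?_eq_getElem?] at hhead
      obtain ⟨h', hx⟩ := List.getElem?_eq_some_iff.mp hhead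
      exact hx
    have hadj := List.isChain_iff_getElem.mp hchain 0 (by omega)
    rw [hx] at hadj
    exact hadj
  case _ =>
    have hadj : Adj x (p[1]'hk1) := by
      have hx : p[0]'(by omega) = x := by
        rw [List.head?_eq_getElem?] at hhead
        obtain ⟨h', hx⟩ := List.getElem?_eq_some_iff.mp hhead
        exact hx
      have hadj := List.isChain_iff_getElem.mp hchain 0 (by omega)
      rw [hx] at hadj
      exact hadj
    have hq : IsWalk p.tail (p[1]'hk1) y := by
      refine ⟨?_, ?_, hchain.suffix p.tail_suffix⟩
      · rw [List.head?_eq_getElem?, List.getElem?_tail]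
        simp
      · rw [List.getLast?_eq_getElem?, List.length_tail, hl, List.getElem?_tail,
          show k + 1 - 1 - 1 + 1 = k from by omega]
        rw [List.getLast?_eq_getElem?, hl, show k + 1 - 1 = k from by omega] at hlast
        exact hlast
    refine le_antisymm (dist_le hq (by rw [List.length_tail, hl]; omega)) ?_
    refine le_csInf ⟨k - 1, p.tail, hq, by rw [List.length_tail, hl]; omega⟩ ?_
    rintro m ⟨q, hq', hql⟩
    have hw2 : IsWalk (x :: q) x y := walk_cons hq' hadj
    have : dist x y ≤ m + 1 := dist_le hw2 (by simp [hql])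
    omega

end Walks

end Kautz

namespace Kautz

section Count

variable {d D : ℕ}

lemma N_le_right (e : Edge d D) {k t : ℕ} (hD : 1 ≤ D) (hk : 2 ≤ k)
    (ht1 : 1 ≤ t) (ht : t ≤ k - 1) :
    N e k t ≤ d * N e (k - 1) t := by
  classical
  set S : Set (Vertex d D × Vertex d D) := {xy : Vertex d D × Vertex d D |
    dist xy.1 xy.2 = k ∧
    ∃ p : List (Vertex d D), IsWalk p xy.1 xy.2 ∧ p.length = k + 1 ∧
      p[t-1]? = some e.src ∧ p[t]? = some e.tgt} with hSdef
  set T : Set (Vertex d D × Vertex d D) := {xy : Vertex d D × Vertex d D |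
    dist xy.1 xy.2 = k - 1 ∧
    ∃ p : List (Vertex d D), IsWalk p xy.1 xy.2 ∧ p.length = (k - 1) + 1 ∧
      p[t-1]? = some e.src ∧ p[t]? = some e.tgt} with hTdef
  have H : ∀ s : S, ∃ tb : T × Fin d,
      (tb.1 : Vertex d D × Vertex d D).1 = (s : Vertex d D × Vertex d D).1 ∧
      (s : Vertex d D × Vertex d D).2.word
        = (tb.1 : Vertex d D × Vertex d D).2.word.tail
          ++ [((tb.1 : Vertex d D × Vertex d D).2.word.getLastD 0).succAbove tb.2] := by
    rintro ⟨⟨x, y⟩, hdist, p, hw, hlen, hsrc, htgt⟩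
    obtain ⟨y', hw', hadj, hdist'⟩ := exists_dropLast (by omega) hw hlen hdist
    obtain ⟨b, hbne, hbeq⟩ := adj_tgt hD hadj
    obtain ⟨c, hc⟩ := Fin.exists_succAbove_eq hbne
    have hmem : (x, y') ∈ T := by
      refine ⟨hdist', p.dropLast, hw', ?_, ?_, ?_⟩
      · rw [List.length_dropLast, hlen]; omega
      · rw [List.getElem?_dropLast, if_pos (by rw [hlen]; omega)]; exact hsrc
      · rw [List.getElem?_dropLast, if_pos (by rw [hlen]; omega)]; exact htgt
    refine ⟨(⟨(x, y'), hmem⟩, c), rfl, ?_⟩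
    show y.word = y'.word.tail ++ [(y'.word.getLastD 0).succAbove c]
    rw [hc]
    exact hbeq
  choose f hf1 hf2 using H
  have hinj : Function.Injective f := by
    rintro s1 s2 heq
    have h1 := hf1 s1
    have h2 := hf1 s2
    have g1 := hf2 s1
    have g2 := hf2 s2
    rw [heq] at h1 g1
    apply Subtype.ext
    apply Prod.ext
    · rw [← h1, ← h2]
    · apply Vertex.ext'
      rw [g1, g2]
  have hcard := Nat.card_le_card_of_injective f hinj
  rw [Nat.card_prod, Nat.card_coe_set_eq, Nat.card_coe_set_eq,
    Nat.card_eq_fintype_card, Fintype.card_fin] at hcard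
  calc N e k t = S.ncard := rfl
    _ ≤ T.ncard * d := hcard
    _ = d * N e (k - 1) t := by rw [Nat.mul_comm]; rfl

lemma N_le_left (e : Edge d D) {k t : ℕ} (hD : 1 ≤ D) (hk : 2 ≤ k)
    (ht2 : 2 ≤ t) (ht : t ≤ k) :
    N e k t ≤ d * N e (k - 1) (t - 1) := by
  classical
  set S : Set (Vertex d D × Vertex d D) := {xy : Vertex d D × Vertex d D |
    dist xy.1 xy.2 = k ∧
    ∃ p : List (Vertex d D), IsWalk p xy.1 xy.2 ∧ p.length = k + 1 ∧
      p[t-1]? = some e.src ∧ p[t]? = some e.tgt} with hSdef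
  set T : Set (Vertex d D × Vertex d D) := {xy : Vertex d D × Vertex d D |
    dist xy.1 xy.2 = k - 1 ∧
    ∃ p : List (Vertex d D), IsWalk p xy.1 xy.2 ∧ p.length = (k - 1) + 1 ∧
      p[t-1-1]? = some e.src ∧ p[t-1]? = some e.tgt} with hTdef
  have H : ∀ s : S, ∃ tb : T × Fin d,
      (tb.1 : Vertex d D × Vertex d D).2 = (s : Vertex d D × Vertex d D).2 ∧
      (s : Vertex d D × Vertex d D).1.word
        = ((tb.1 : Vertex d D × Vertex d D).1.word.headD 0).succAbove tb.2
          :: (tb.1 : Vertex d D × Vertex d D).1.word.dropLast := by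
    rintro ⟨⟨x, y⟩, hdist, p, hw, hlen, hsrc, htgt⟩
    obtain ⟨x', hw', hadj, hdist'⟩ := exists_tail (by omega) hw hlen hdist
    obtain ⟨a, hane, haeq⟩ := adj_src hD hadj
    obtain ⟨c, hc⟩ := Fin.exists_succAbove_eq hane
    have hmem : (x', y) ∈ T := by
      refine ⟨hdist', p.tail, hw', ?_, ?_, ?_⟩
      · rw [List.length_tail, hlen]; omega
      · rw [List.getElem?_tail, show t - 1 - 1 + 1 = t - 1 from by omega]; exact hsrc
      · rw [List.getElem?_tail, show t - 1 + 1 = t from by omega]; exact htgt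
    refine ⟨(⟨(x', y), hmem⟩, c), rfl, ?_⟩
    show x.word = (x'.word.headD 0).succAbove c :: x'.word.dropLast
    rw [hc]
    exact haeq
  choose f hf1 hf2 using H
  have hinj : Function.Injective f := by
    rintro s1 s2 heq
    have h1 := hf1 s1
    have h2 := hf1 s2
    have g1 := hf2 s1
    have g2 := hf2 s2
    rw [heq] at h1 g1
    apply Subtype.ext
    apply Prod.ext
    · apply Vertex.ext'
      rw [g1, g2]
    · rw [← h1, ← h2]
  have hcard := Nat.card_le_card_of_injective f hinj
  rw [Nat.card_prod, Nat.card_coe_set_eq, Nat.card_coe_set_eq,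
    Nat.card_eq_fintype_card, Fintype.card_fin] at hcard
  calc N e k t = S.ncard := rfl
    _ ≤ T.ncard * d := hcard
    _ = d * N e (k - 1) (t - 1) := by rw [Nat.mul_comm]; rfl

lemma U_step (e : Edge d D) {k : ℕ} (hD : 1 ≤ D) (hk : 2 ≤ k) :
    (k - 1) * U e k ≤ d * k * U e (k - 1) := by
  obtain ⟨m, rfl⟩ : ∃ m, k = m + 1 := ⟨k - 1, by omega⟩
  have hm : 1 ≤ m := by omega
  simp only [Nat.add_sub_cancel]
  have key : ∀ t ∈ Finset.Icc 1 (m + 1),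
      m * N e (m+1) t ≤ d * ((m + 1 - t) * N e m t + (t - 1) * N e m (t - 1)) := by
    intro t htmem
    simp only [Finset.mem_Icc] at htmem
    have h1 : (m + 1 - t) * N e (m+1) t ≤ (m + 1 - t) * (d * N e m t) := by
      rcases Nat.lt_or_ge t (m+1) with h | h
      · refine Nat.mul_le_mul_left _ ?_
        have := N_le_right e hD hk htmem.1 (by omega)
        simpa using this
      · have h0 : m + 1 - t = 0 := by omega
        simp [h0]
    have h2 : (t - 1) * N e (m+1) t ≤ (t - 1) * (d * N e m (t - 1)) := by
      rcases Nat.lt_or_ge 1 t with h | h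
      · refine Nat.mul_le_mul_left _ ?_
        have := N_le_left e hD hk (by omega) htmem.2
        simpa using this
      · have h0 : t - 1 = 0 := by omega
        simp [h0]
    have hsplit : m * N e (m+1) t = (m + 1 - t) * N e (m+1) t + (t - 1) * N e (m+1) t := by
      rw [← Nat.add_mul]
      congr 1
      omega
    rw [hsplit]
    calc (m + 1 - t) * N e (m+1) t + (t - 1) * N e (m+1) t
        ≤ (m + 1 - t) * (d * N e m t) + (t - 1) * (d * N e m (t - 1)) :=
          Nat.add_le_add h1 h2
      _ = d * ((m + 1 - t) * N e m t + (t - 1) * N e m (t - 1)) := by ring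
  have hsum := Finset.sum_le_sum key
  have hL : ∑ t ∈ Finset.Icc 1 (m+1), m * N e (m+1) t = m * U e (m+1) := by
    rw [U, Finset.mul_sum]
  have hR1 : ∑ t ∈ Finset.Icc 1 (m+1), (m + 1 - t) * N e m t
      = ∑ t ∈ Finset.Icc 1 m, (m + 1 - t) * N e m t := by
    refine (Finset.sum_subset ?_ ?_).symm
    · intro x hx; simp only [Finset.mem_Icc] at hx ⊢; omega
    · intro x hx hnx
      simp only [Finset.mem_Icc] at hx hnx
      have : x = m + 1 := by omega
      simp [this]
  have hR2 : ∑ t ∈ Finset.Icc 1 (m+1), (t - 1) * N e m (t - 1)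
      = ∑ t ∈ Finset.Icc 1 m, t * N e m t := by
    rw [show Finset.Icc 1 (m+1) = Finset.map ⟨fun s => s + 1, add_left_injective 1⟩ (Finset.Icc 0 m) from ?_]
    · rw [Finset.sum_map]
      simp only [Function.Embedding.coeFn_mk, Nat.add_sub_cancel]
      refine (Finset.sum_subset ?_ ?_).symm
      · intro x hx; simp only [Finset.mem_Icc] at hx ⊢; omega
      · intro x hx hnx
        simp only [Finset.mem_Icc] at hx hnx
        have : x = 0 := by omega
        simp [this]
    · ext x
      simp only [Finset.mem_Icc, Finset.mem_map, Function.Embedding.coeFn_mk]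
      constructor
      · intro hx; exact ⟨x - 1, by omega, by omega⟩
      · rintro ⟨a, ha, rfl⟩
        show 1 ≤ a + 1 ∧ a + 1 ≤ m + 1
        omega
  have hRtot : ∑ t ∈ Finset.Icc 1 (m+1),
      d * ((m + 1 - t) * N e m t + (t - 1) * N e m (t - 1))
      = d * (m + 1) * U e m := by
    rw [← Finset.mul_sum, Finset.sum_add_distrib, hR1, hR2, ← Finset.sum_add_distrib]
    have : ∑ t ∈ Finset.Icc 1 m, ((m + 1 - t) * N e m t + t * N e m t)
        = ∑ t ∈ Finset.Icc 1 m, (m + 1) * N e m t := by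
      refine Finset.sum_congr rfl ?_
      intro x hx
      simp only [Finset.mem_Icc] at hx
      rw [← Nat.add_mul]
      congr 1
      omega
    rw [this, ← Finset.mul_sum, ← Nat.mul_assoc]
    rfl
  rw [hL, hRtot] at hsum
  exact hsum

end Count

end Kautz


/-- For `d ≥ 2`, any directed edge `e` of `K(d,D)` and any `2 ≤ k ≤ D`,
`U_{k−1}(e) ≥ ((k−1)/(d·k))·U_k(e)`. -/
theorem statement7 (d D : ℕ) (hd : 2 ≤ d) (e : Kautz.Edge d D)
    (k : ℕ) (hk2 : 2 ≤ k) (hkD : k ≤ D) :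
    (((k : ℝ) - 1) / ((d : ℝ) * (k : ℝ))) * (Kautz.U e k : ℝ)
      ≤ (Kautz.U e (k - 1) : ℝ) := by
  have hD : 1 ≤ D := by omega
  have hnat := Kautz.U_step (d := d) e hD hk2
  have hcast : ((k : ℝ) - 1) * (Kautz.U e k : ℝ)
      ≤ (d : ℝ) * (k : ℝ) * (Kautz.U e (k - 1) : ℝ) := by
    have h1 : (((k - 1) * Kautz.U e k : ℕ) : ℝ)
        ≤ ((d * k * Kautz.U e (k - 1) : ℕ) : ℝ) := Nat.cast_le.mpr hnat
    push_cast [Nat.cast_sub (show 1 ≤ k from by omega)] at h1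
    convert h1 using 2 <;> push_cast <;> ring
  have hpos : (0 : ℝ) < (d : ℝ) * (k : ℝ) := by
    have h1 : (0 : ℝ) < (d : ℝ) := by exact_mod_cast (show 0 < d by omega)
    have h2 : (0 : ℝ) < (k : ℝ) := by exact_mod_cast (show 0 < k by omega)
    exact mul_pos h1 h2
  rw [div_mul_eq_mul_div, div_le_iff₀ hpos]
  linarith [hcast]
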